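/- Let X = X_1 × ⋯ × X_n be a finite product space with each X_i a finite nonempty set, θ : X → ℝ, and Z = Σ_{x∈X} exp(θ(x)). Let A be a finite nonempty family of nonempty subsets α ⊆ {1,…,n}, and for each α ∈ A let {γ_α(x_α)} be independent zero-mean Gumbel random variables, one for each α and each assignment x_α ∈ Π_{i∈α} X_i (independent across all α and x_α). Then log Z ≥ E_γ[ max_{x∈X} { θ(x) + (1/|A|) Σ_{α∈A} γ_α(x_α) } ]. -/

import Mathlib

open MeasureTheory Real ProbabilityTheory

open Set
open scoped ENNReal NNReal

local notation "γc" => Real.eulerMascheroniConstant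

lemma mellinconv_log_exp :
    IntegrableOn (fun t : ℝ => ((Real.log t * Real.exp (-t) : ℝ) : ℂ)) (Ioi 0) ∧
    HasDerivAt Complex.GammaIntegral
      (∫ t : ℝ in Ioi 0, ((Real.log t * Real.exp (-t) : ℝ) : ℂ)) 1 := by
  have h := mellin_hasDerivAt_of_isBigO_rpow (E := ℂ) (a := 2) (b := 0)
    (f := fun x => (Real.exp (-x) : ℂ)) (s := 1) ?_ ?_ ?_ ?_ ?_
  · obtain ⟨h1, h2⟩ := h
    rw [MellinConvergent] at h1
    have he : ∀ t ∈ Ioi (0:ℝ), ((t : ℂ) ^ ((1:ℂ) - 1) • (Real.log t • (Real.exp (-t) : ℂ)))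
        = ((Real.log t * Real.exp (-t) : ℝ) : ℂ) := by
      intro t ht; simp
    constructor
    · exact h1.congr_fun he measurableSet_Ioi
    · rw [← Complex.GammaIntegral_eq_mellin] at h2
      refine h2.congr_deriv ?_
      rw [mellin]
      exact (setIntegral_congr_fun measurableSet_Ioi (fun t ht => (he t ht).symm)).symm
  · refine (Continuous.continuousOn ?_).locallyIntegrableOn measurableSet_Ioi
    exact Complex.continuous_ofReal.comp (Real.continuous_exp.comp continuous_neg)
  · rw [← Asymptotics.isBigO_norm_left]
    simp_rw [Complex.norm_real,
      Asymptotics.isBigO_norm_left]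
    simpa only [neg_one_mul] using (isLittleO_exp_neg_mul_rpow_atTop zero_lt_one _).isBigO
  · norm_num
  · simp_rw [neg_zero, Real.rpow_zero]
    refine Asymptotics.isBigO_const_of_tendsto (?_ : Filter.Tendsto _ _ (nhds (1 : ℂ))) one_ne_zero
    rw [(by simp : (1 : ℂ) = Real.exp (-0))]
    exact (Complex.continuous_ofReal.comp
      (Real.continuous_exp.comp continuous_neg)).continuousWithinAt
  · norm_num

lemma integrableOn_log_mul_exp_neg :
    IntegrableOn (fun t : ℝ => Real.log t * Real.exp (-t)) (Ioi 0) := by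
  have h := mellinconv_log_exp.1.re
  refine (integrable_congr ?_).mp h
  filter_upwards with t
  exact Complex.ofReal_re _

lemma integral_log_mul_exp_neg :
    ∫ t in Ioi (0:ℝ), Real.log t * Real.exp (-t) = -γc := by
  have h2 := mellinconv_log_exp.2
  have hG : HasDerivAt Complex.Gamma
      (∫ t : ℝ in Ioi 0, ((Real.log t * Real.exp (-t) : ℝ) : ℂ)) 1 := by
    refine h2.congr_of_eventuallyEq ?_
    have : {z : ℂ | 0 < z.re} ∈ nhds (1 : ℂ) := by
      refine IsOpen.mem_nhds ?_ (by norm_num)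
      exact isOpen_lt continuous_const Complex.continuous_re
    filter_upwards [this] with z hz
    exact Complex.Gamma_eq_integral hz
  have hu : (∫ t : ℝ in Ioi 0, ((Real.log t * Real.exp (-t) : ℝ) : ℂ))
      = ((-γc : ℝ) : ℂ) := by
    have := hG.unique Complex.hasDerivAt_Gamma_one
    rw [this]; push_cast; ring
  rw [show (∫ t : ℝ in Ioi 0, ((Real.log t * Real.exp (-t) : ℝ) : ℂ))
      = ((∫ t : ℝ in Ioi 0, Real.log t * Real.exp (-t) : ℝ) : ℂ) from integral_ofReal] at hu
  exact_mod_cast hu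

noncomputable def expM : Measure ℝ :=
  (volume.restrict (Ioi 0)).withDensity (fun u => ENNReal.ofReal (Real.exp (-u)))

lemma expM_apply {s : Set ℝ} (hs : MeasurableSet s) :
    expM s = ∫⁻ u in s ∩ Ioi 0, ENNReal.ofReal (Real.exp (-u)) := by
  rw [expM, withDensity_apply _ hs, Measure.restrict_restrict hs]

lemma lint_exp_neg {s : Set ℝ} (hs : MeasurableSet s)
    (hint : IntegrableOn (fun u => Real.exp (-u)) s) :
    ∫⁻ u in s, ENNReal.ofReal (Real.exp (-u)) = ENNReal.ofReal (∫ u in s, Real.exp (-u)) := by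
  rw [← ofReal_integral_eq_lintegral_ofReal hint]
  filter_upwards with u using (Real.exp_pos _).le

lemma integrableOn_exp_neg {s : Set ℝ} (hsub : s ⊆ Ioi 0) (hs : MeasurableSet s) :
    IntegrableOn (fun u => Real.exp (-u)) s := by
  refine IntegrableOn.mono_set ?_ hsub
  have := exp_neg_integrableOn_Ioi 0 (one_pos)
  refine this.congr_fun (fun x _ => by norm_num) measurableSet_Ioi

lemma expM_Ici {a : ℝ} (ha : 0 < a) : expM (Ici a) = ENNReal.ofReal (Real.exp (-a)) := by
  rw [expM_apply measurableSet_Ici]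
  have h1 : Ici a ∩ Ioi 0 = Ici a := inter_eq_left.mpr (fun x hx => lt_of_lt_of_le ha hx)
  rw [h1]
  have h2 : (volume.restrict (Ici a)) = volume.restrict (Ioi a) := by
    refine Measure.restrict_congr_set ?_
    exact (Ioi_ae_eq_Ici (a := a)).symm
  rw [show (∫⁻ u in Ici a, ENNReal.ofReal (Real.exp (-u)))
      = ∫⁻ u in Ioi a, ENNReal.ofReal (Real.exp (-u)) by rw [h2],
    lint_exp_neg measurableSet_Ioi (integrableOn_exp_neg (fun x hx => lt_trans ha hx) measurableSet_Ioi),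
    integral_exp_neg_Ioi]

instance : IsProbabilityMeasure expM := by
  constructor
  rw [expM_apply MeasurableSet.univ, univ_inter,
    lint_exp_neg measurableSet_Ioi (integrableOn_exp_neg (fun x hx => hx) measurableSet_Ioi),
    integral_exp_neg_Ioi_zero, ENNReal.ofReal_one]

lemma expM_def' : expM = (volume.restrict (Ioi 0)).withDensity
    (fun u => ((Real.exp (-u)).toNNReal : ℝ≥0∞)) := rfl

lemma measurable_expnnreal : Measurable (fun u : ℝ => (Real.exp (-u)).toNNReal) := by
  exact (measurable_exp.comp measurable_neg).real_toNNReal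

lemma expM_integral (g : ℝ → ℝ) :
    ∫ u, g u ∂expM = ∫ u in Ioi 0, Real.exp (-u) * g u := by
  rw [expM_def', integral_withDensity_eq_integral_smul measurable_expnnreal]
  simp [NNReal.smul_def, Real.coe_toNNReal _ (Real.exp_pos _).le]

lemma expM_integrable (g : ℝ → ℝ)
    (h : IntegrableOn (fun u => Real.exp (-u) * g u) (Ioi 0)) : Integrable g expM := by
  rw [expM_def', integrable_withDensity_iff_integrable_smul measurable_expnnreal]
  refine (integrable_congr ?_).mpr h
  filter_upwards with u
  simp [NNReal.smul_def, Real.coe_toNNReal _ (Real.exp_pos _).le]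

lemma expM_integrable_log : Integrable Real.log expM := by
  refine expM_integrable _ ?_
  refine (integrableOn_log_mul_exp_neg.congr_fun (fun u _ => by ring) measurableSet_Ioi)

lemma expM_integral_log : ∫ u, Real.log u ∂expM = -γc := by
  rw [expM_integral, ← integral_log_mul_exp_neg]
  exact setIntegral_congr_fun measurableSet_Ioi (fun u _ => by ring)

lemma expM_shift (m : ℝ) :
    Integrable (fun u => m - γc - Real.log u) expM ∧
    ∫ u, (m - γc - Real.log u) ∂expM = m := by
  have hi : Integrable (fun u => m - γc - Real.log u) expM :=
    (integrable_const (m - γc)).sub expM_integrable_log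
  refine ⟨hi, ?_⟩
  rw [integral_sub (integrable_const _) expM_integrable_log, expM_integral_log,
    integral_const]
  simp

lemma gumbel_mean {Ω : Type*} [MeasurableSpace Ω] (P : Measure Ω) [IsProbabilityMeasure P]
    {Y : Ω → ℝ} (hY : Measurable Y) (m : ℝ)
    (hcdf : ∀ t, P {ω | Y ω ≤ t} = ENNReal.ofReal (Real.exp (-Real.exp (-(t + γc - m))))) :
    Integrable Y P ∧ ∫ ω, Y ω ∂P = m := by
  set f : ℝ → ℝ := fun u => m - γc - Real.log u with hf
  have hfm : Measurable f := (measurable_const.sub measurable_log)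
  have hlaw : P.map Y = expM.map f := by
    have : IsProbabilityMeasure (P.map Y) := Measure.isProbabilityMeasure_map hY.aemeasurable
    refine Measure.ext_of_Iic _ _ (fun t => ?_)
    rw [Measure.map_apply hY measurableSet_Iic, Measure.map_apply hfm measurableSet_Iic]
    have hpre : f ⁻¹' (Iic t) ∩ Ioi 0 = Ici (Real.exp (m - γc - t)) := by
      ext u
      simp only [mem_inter_iff, mem_preimage, mem_Iic, mem_Ioi, mem_Ici, hf]
      constructor
      · rintro ⟨h1, h2⟩
        rw [← Real.le_log_iff_exp_le h2]
        linarith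
      · intro h1
        have hu : 0 < u := lt_of_lt_of_le (Real.exp_pos _) h1
        have := (Real.le_log_iff_exp_le hu).mpr h1
        exact ⟨by linarith, hu⟩
    have : expM (f ⁻¹' Iic t) = ENNReal.ofReal (Real.exp (-(Real.exp (m - γc - t)))) := by
      set a := Real.exp (m - γc - t) with ha
      rw [expM_apply (hfm measurableSet_Iic), hpre]
      have h2 : (volume.restrict (Ici a)) = volume.restrict (Ioi a) :=
        Measure.restrict_congr_set (Ioi_ae_eq_Ici).symm
      rw [show (∫⁻ u in Ici a, ENNReal.ofReal (Real.exp (-u)))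
          = ∫⁻ u in Ioi a, ENNReal.ofReal (Real.exp (-u)) by rw [h2],
        lint_exp_neg measurableSet_Ioi (integrableOn_exp_neg
          (fun x hx => lt_trans (Real.exp_pos _) hx) measurableSet_Ioi),
        integral_exp_neg_Ioi]
    rw [this]
    show P (Y ⁻¹' Iic t) = _
    rw [show Y ⁻¹' Iic t = {ω | Y ω ≤ t} from rfl, hcdf t]
    congr 3
    ring_nf
  have hInt : Integrable Y P := by
    have h1 : Integrable id (P.map Y) := by
      rw [hlaw]
      rw [integrable_map_measure aestronglyMeasurable_id hfm.aemeasurable]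
      exact (expM_shift m).1
    exact (integrable_map_measure aestronglyMeasurable_id hY.aemeasurable).mp h1
  refine ⟨hInt, ?_⟩
  have h2 : ∫ ω, Y ω ∂P = ∫ u, u ∂(P.map Y) :=
    (integral_map hY.aemeasurable aestronglyMeasurable_id).symm
  rw [h2, hlaw]
  exact (integral_map hfm.aemeasurable aestronglyMeasurable_id).trans (expM_shift m).2

lemma gumbel_max {Ω V : Type*} [MeasurableSpace Ω] [Fintype V] [Nonempty V]
    (P : Measure Ω) [IsProbabilityMeasure P]
    (g : V → Ω → ℝ) (hg : ∀ v, Measurable (g v))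
    (hprod : ∀ t : V → ℝ, P (⋂ v, {ω | g v ω ≤ t v}) = ∏ v, P {ω | g v ω ≤ t v})
    (hcdf : ∀ v t, P {ω | g v ω ≤ t} = ENNReal.ofReal (Real.exp (-Real.exp (-(t + γc)))))
    (c : V → ℝ) :
    Integrable (fun ω => Finset.univ.sup' Finset.univ_nonempty (fun v => c v + g v ω)) P ∧
    ∫ ω, Finset.univ.sup' Finset.univ_nonempty (fun v => c v + g v ω) ∂P
      = Real.log (∑ v, Real.exp (c v)) := by
  set m := Real.log (∑ v, Real.exp (c v)) with hm
  have hpos : 0 < ∑ v, Real.exp (c v) :=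
    Finset.sum_pos (fun v _ => Real.exp_pos _) Finset.univ_nonempty
  have hM : Measurable (fun ω => Finset.univ.sup' Finset.univ_nonempty (fun v => c v + g v ω)) := by
    have := Finset.measurable_sup' (Finset.univ_nonempty (α := V))
      (f := fun v ω => c v + g v ω) (fun v _ => measurable_const.add (hg v))
    convert this using 1
    ext ω
    simp [Finset.sup'_apply]
  refine gumbel_mean P hM m (fun t => ?_)
  have hset : {ω | Finset.univ.sup' Finset.univ_nonempty (fun v => c v + g v ω) ≤ t}
      = ⋂ v, {ω | g v ω ≤ t - c v} := by
    ext ω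
    rw [mem_setOf_eq, Finset.sup'_le_iff, mem_iInter]
    refine forall_congr' (fun v => ?_)
    simp only [Finset.mem_univ, true_implies, mem_setOf_eq]
    constructor <;> intro <;> linarith
  rw [hset, hprod (fun v => t - c v)]
  have : ∀ v, P {ω | g v ω ≤ t - c v}
      = ENNReal.ofReal (Real.exp (-Real.exp (-(t - c v + γc)))) := fun v => hcdf v _
  simp_rw [this]
  rw [← ENNReal.ofReal_prod_of_nonneg (fun v _ => (Real.exp_pos _).le), ← Real.exp_sum]
  congr 1
  have hsum : ∑ v, -Real.exp (-(t - c v + γc))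
      = -Real.exp (-(t + γc)) * ∑ v, Real.exp (c v) := by
    rw [Finset.mul_sum]
    refine Finset.sum_congr rfl (fun v _ => ?_)
    have h3 : -(t - c v + γc) = -(t + γc) + c v := by ring
    rw [h3, Real.exp_add]
    ring
  rw [hsum, ← Real.exp_log hpos, ← hm, neg_mul, ← Real.exp_add]
  congr 2
  ring

def restr {n : ℕ} (X : Fin n → Type*) (α : Finset (Fin n)) (x : ∀ i, X i) :
    (i : α) → X i := fun i => x i

set_option maxHeartbeats 1000000 in

/-- Let `X = X₁ × ⋯ × Xₙ` be a finite product space, `θ : X → ℝ`,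
`Z = ∑_x exp (θ x)`, and `A` a nonempty family of nonempty subsets of the coordinates.  If
`γ α v`, one for each `α ∈ A` and each assignment `v` to the coordinates in `α`, are
mutually independent zero-mean Gumbel random variables, then
`log Z ≥ E[max_x {θ x + (1/|A|) ∑_{α∈A} γ α (x_α)}]`. -/
theorem log_partition_ge_expected_max_averaged_perturbation
    {n : ℕ} (X : Fin n → Type*) [∀ i, Fintype (X i)] [∀ i, Nonempty (X i)]
    (θ : (∀ i, X i) → ℝ)
    (A : Finset (Finset (Fin n))) (hA : A.Nonempty) (hne : ∀ α ∈ A, α.Nonempty)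
    {Ω : Type*} [MeasurableSpace Ω] (P : Measure Ω) [IsProbabilityMeasure P]
    (γ : (α : Finset (Fin n)) → ((i : α) → X i) → Ω → ℝ)
    (hmeas : ∀ α v, Measurable (γ α v))
    (hindep : iIndepFun
      (fun p : (α : {a // a ∈ A}) × ((i : (α.1 : Finset (Fin n))) → X i) => γ p.1 p.2) P)
    (hcdf : ∀ α v t, P {ω | γ α v ω ≤ t} =
      ENNReal.ofReal (exp (-exp (-(t + eulerMascheroniConstant))))) :
    ∫ ω, (⨆ x : ∀ i, X i,
        (θ x + (1 / (A.card : ℝ)) * ∑ α ∈ A.attach, γ α.1 (fun i => x i) ω)) ∂P ≤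
      Real.log (∑ x : ∀ i, X i, exp (θ x)) := by
  classical
  have hk : (0:ℝ) < (A.card : ℝ) := by exact_mod_cast Finset.card_pos.mpr hA
  set Z := ∑ x : ∀ i, X i, exp (θ x) with hZ
  -- fiber weights
  set c : (a : {a // a ∈ A}) → ((i : (a.1 : Finset (Fin n))) → X i) → ℝ :=
    fun a v => Real.log (∑ x ∈ Finset.univ.filter
      (fun x : ∀ i, X i => restr X a.1 x = v), Real.exp (θ x)) with hc
  have hfiber : ∀ (a : {a // a ∈ A}) (v : (i : (a.1 : Finset (Fin n))) → X i),
      (Finset.univ.filter (fun x : ∀ i, X i => restr X a.1 x = v)).Nonempty := by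
    intro a v
    refine ⟨fun j => if h : j ∈ (a.1 : Finset (Fin n)) then v ⟨j, h⟩
      else Classical.arbitrary _, ?_⟩
    simp only [Finset.mem_filter, Finset.mem_univ, true_and]
    funext i
    exact dif_pos i.2
  have hcpos : ∀ (a : {a // a ∈ A}) (v : (i : (a.1 : Finset (Fin n))) → X i),
      (0:ℝ) < ∑ x ∈ Finset.univ.filter
      (fun x : ∀ i, X i => restr X a.1 x = v), Real.exp (θ x) :=
    fun a v => Finset.sum_pos (fun x _ => Real.exp_pos _) (hfiber a v)
  have hθle : ∀ (a : {a // a ∈ A}) (x : ∀ i, X i), θ x ≤ c a (restr X a.1 x) := by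
    intro a x
    rw [hc, Real.le_log_iff_exp_le (hcpos a _)]
    exact Finset.single_le_sum (fun y _ => (Real.exp_pos (θ y)).le)
      (Finset.mem_filter.mpr ⟨Finset.mem_univ x, rfl⟩)
  have hsumc : ∀ a : {a // a ∈ A},
      ∑ v : (i : (a.1 : Finset (Fin n))) → X i, Real.exp (c a v) = Z := by
    intro a
    have h1 : ∀ v : (i : (a.1 : Finset (Fin n))) → X i, Real.exp (c a v)
        = ∑ x ∈ Finset.univ.filter (fun x : ∀ i, X i => restr X a.1 x = v),
          Real.exp (θ x) := fun v => Real.exp_log (hcpos a v)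
    rw [hZ, Finset.sum_congr rfl (fun v _ => h1 v)]
    exact Finset.sum_fiberwise _ _ _
  -- independence product per a
  have hprod : ∀ (a : {a // a ∈ A}) (t : ((i : (a.1 : Finset (Fin n))) → X i) → ℝ),
      P (⋂ v, {ω | γ a.1 v ω ≤ t v}) = ∏ v, P {ω | γ a.1 v ω ≤ t v} := by
    intro a t
    set ι := (α : {a // a ∈ A}) × ((i : (α.1 : Finset (Fin n))) → X i)
    set τ : ι → ℝ := fun p => if h : p.1 = a then t (h ▸ p.2) else 0 with hτ
    have hτa : ∀ v, τ ⟨a, v⟩ = t v := fun v => dif_pos rfl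
    set S : Finset ι := Finset.univ.map
      ⟨Sigma.mk a, sigma_mk_injective⟩ with hS
    have key := hindep.measure_inter_preimage_eq_mul S
      (sets := fun p => Iic (τ p)) (fun p _ => measurableSet_Iic)
    have hinter : (⋂ p ∈ S, (fun ω => γ p.1 p.2 ω) ⁻¹' Iic (τ p))
        = ⋂ v, {ω | γ a.1 v ω ≤ t v} := by
      ext ω
      simp only [mem_iInter, mem_preimage, mem_Iic, hS, Finset.mem_map,
        Finset.mem_univ, true_and, mem_setOf_eq, Function.Embedding.coeFn_mk]
      constructor
      · intro h v
        have := h ⟨a, v⟩ ⟨v, rfl⟩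
        rwa [hτa v] at this
      · rintro h p ⟨v, -, rfl⟩
        rw [hτa v]
        exact h v
    have hprodS : (∏ p ∈ S, P ((fun ω => γ p.1 p.2 ω) ⁻¹' Iic (τ p)))
        = ∏ v, P {ω | γ a.1 v ω ≤ t v} := by
      rw [hS, Finset.prod_map]
      refine Finset.prod_congr rfl (fun v _ => ?_)
      simp only [Function.Embedding.coeFn_mk]
      rw [hτa v]
      rfl
    rw [← hinter, key, hprodS]
  -- the dominating variables
  set M : (a : {a // a ∈ A}) → Ω → ℝ := fun a ω =>
    Finset.univ.sup' Finset.univ_nonempty (fun v => c a v + γ a.1 v ω) with hM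
  have hMfact : ∀ a : {a // a ∈ A}, Integrable (M a) P ∧ ∫ ω, M a ω ∂P = Real.log Z := by
    intro a
    have h := gumbel_max P (fun v => γ a.1 v) (fun v => hmeas _ _) (hprod a)
      (fun v t => hcdf _ _ _) (c a)
    rwa [hsumc a] at h
  have hγint : ∀ (a : {a // a ∈ A}) v, Integrable (γ a.1 v) P := by
    intro a v
    refine (gumbel_mean P (hmeas a.1 v) 0 (fun t => ?_)).1
    rw [hcdf]
    norm_num
  set G : Ω → ℝ := fun ω => (1 / (A.card : ℝ)) * ∑ a ∈ A.attach, M a ω with hG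
  set F : Ω → ℝ := fun ω => ⨆ x : ∀ i, X i,
      (θ x + (1 / (A.card : ℝ)) * ∑ α ∈ A.attach, γ α.1 (fun i => x i) ω) with hF
  have hFG : ∀ ω, F ω ≤ G ω := by
    intro ω
    refine ciSup_le (fun x => ?_)
    have h1 : ∀ a ∈ A.attach, θ x + γ a.1 (fun i => x i) ω ≤ M a ω := by
      intro a _
      calc θ x + γ a.1 (fun i => x i) ω
          ≤ c a (restr X a.1 x) + γ a.1 (restr X a.1 x) ω := by
            exact add_le_add_left (hθle a x) _
        _ ≤ M a ω := Finset.le_sup' (fun v => c a v + γ a.1 v ω)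
            (Finset.mem_univ (restr X a.1 x))
    calc θ x + (1 / (A.card : ℝ)) * ∑ α ∈ A.attach, γ α.1 (fun i => x i) ω
        = (1 / (A.card : ℝ)) * ∑ a ∈ A.attach, (θ x + γ a.1 (fun i => x i) ω) := by
          rw [Finset.sum_add_distrib, Finset.sum_const, Finset.card_attach,
            nsmul_eq_mul, mul_add, ← mul_assoc, one_div,
            inv_mul_cancel₀ (ne_of_gt hk), one_mul]
      _ ≤ G ω := by
          rw [hG]
          refine mul_le_mul_of_nonneg_left (Finset.sum_le_sum h1) (by positivity)
  have hGint : Integrable G P :=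
    (integrable_finset_sum _ (fun a _ => (hMfact a).1)).const_mul _
  obtain ⟨x₀⟩ : Nonempty (∀ i, X i) := inferInstance
  set L : Ω → ℝ := fun ω => θ x₀ + (1 / (A.card : ℝ)) *
      ∑ a ∈ A.attach, γ a.1 (fun i => x₀ i) ω with hL
  have hLint : Integrable L P :=
    (integrable_const _).add ((integrable_finset_sum _ (fun a _ => hγint a _)).const_mul _)
  have hLF : ∀ ω, L ω ≤ F ω := by
    intro ω
    exact le_ciSup (f := fun x : ∀ i, X i => θ x + (1 / (A.card : ℝ)) *
      ∑ a ∈ A.attach, γ a.1 (fun i => x i) ω)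
      (Set.Finite.bddAbove (Set.finite_range _)) x₀
  have hFmeas : AEStronglyMeasurable F P := by
    have h2 : F = fun ω => Finset.univ.sup' Finset.univ_nonempty
        (fun x : ∀ i, X i => θ x + (1 / (A.card : ℝ)) *
          ∑ α ∈ A.attach, γ α.1 (fun i => x i) ω) := by
      funext ω
      exact (Finset.sup'_univ_eq_ciSup _).symm
    rw [h2]
    have h3 := Finset.measurable_sup' (Finset.univ_nonempty (α := ∀ i, X i))
      (f := fun (x : ∀ i, X i) ω => θ x + (1 / (A.card : ℝ)) *
        ∑ α ∈ A.attach, γ α.1 (fun i => x i) ω)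
      (fun x _ => measurable_const.add
        ((Finset.measurable_sum _ (fun a _ => hmeas _ _)).const_mul _))
    have h4 : Measurable (fun ω => Finset.univ.sup' Finset.univ_nonempty
        (fun x : ∀ i, X i => θ x + (1 / (A.card : ℝ)) *
          ∑ α ∈ A.attach, γ α.1 (fun i => x i) ω)) := by
      convert h3 using 1
      ext ω
      simp [Finset.sup'_apply]
    exact h4.aestronglyMeasurable
  have hFint : Integrable F P := by
    refine Integrable.mono' (hLint.abs.add hGint.abs) hFmeas ?_
    filter_upwards with ω
    rw [Real.norm_eq_abs, abs_le]
    have h1 := hLF ω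
    have h2 := hFG ω
    have h3 := le_abs_self (L ω)
    have h4 := neg_abs_le (L ω)
    have h5 := le_abs_self (G ω)
    have h6 := neg_abs_le (G ω)
    constructor <;> simp only [Pi.add_apply, Pi.abs_apply] <;> linarith
  calc ∫ ω, F ω ∂P ≤ ∫ ω, G ω ∂P := integral_mono hFint hGint hFG
    _ = Real.log Z := by
        rw [hG]
        simp only
        rw [integral_const_mul, integral_finset_sum _ (fun a _ => (hMfact a).1)]
        rw [Finset.sum_congr rfl (fun a _ => (hMfact a).2), Finset.sum_const,
          Finset.card_attach, nsmul_eq_mul]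
        field_simp
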